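/- arXiv:quant-ph/0702250 — 4 statements merged into one kernel-verified Lean document; each statement's English description precedes it below -/
import Mathlib

section
/- Let $({\bf X}, I)$ be an $l \times (l+m)$ random Toeplitz matrix over $\mathbb{F}_2$, i.e., $X_{i,j} = Y_{i+j-1}$ where $Y_1,\ldots,Y_{l+m-1}$ are independent uniform random bits. Then for any nonzero $Z \in \mathbb{F}_2^{l+m}$, the probability that $Z$ belongs to the image of the transpose $({\bf X},I)^T$ is at most $2^{-m}$. -/
open Finset Matrix

/-- The `l × (l+m)` Toeplitz matrix `(X, I)` over `F₂` determined by the bits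
`Y₁, …, Y_{l+m-1}`: the left block has entries `X i j = Y (i+j-1)` (0-indexed: `Y (i+j)`)
and the right block is the identity. -/
def toeplitzMat (l m : ℕ) (Y : Fin (l + m - 1) → ZMod 2) :
    Matrix (Fin l) (Fin m ⊕ Fin l) (ZMod 2) :=
  fun i j =>
    match j with
    | Sum.inl k => Y ⟨(i : ℕ) + (k : ℕ), by have := i.2; have := k.2; omega⟩
    | Sum.inr k => if i = k then 1 else 0

set_option maxHeartbeats 1000000 in
open Classical in
/-- For a random Toeplitz matrix `(X, I)` (with i.i.d. uniform bits `Y`), any nonzero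
`Z ∈ F₂^{l+m}` belongs to the image of the transpose `(X, I)ᵀ` with probability at
most `2^{-m}`. -/
theorem toeplitz_image_prob_le (l m : ℕ) (Z : Fin m ⊕ Fin l → ZMod 2) (hZ : Z ≠ 0) :
    ((Finset.univ.filter (fun Y : Fin (l + m - 1) → ZMod 2 =>
        ∃ v : Fin l → ZMod 2, Z = (toeplitzMat l m Y)ᵀ.mulVec v)).card : ℝ)
      / 2 ^ (l + m - 1) ≤ ((2 : ℝ) ^ m)⁻¹ := by
  classical
  have hpow : (0 : ℝ) < 2 ^ (l + m - 1) := by positivity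
  -- trivial case m = 0
  by_cases hm : m = 0
  · subst hm
    have h1 : ((Finset.univ.filter (fun Y : Fin (l + 0 - 1) → ZMod 2 =>
        ∃ v : Fin l → ZMod 2, Z = (toeplitzMat l 0 Y)ᵀ.mulVec v)).card : ℝ)
        ≤ 2 ^ (l + 0 - 1) := by
      have := Finset.card_filter_le (Finset.univ : Finset (Fin (l + 0 - 1) → ZMod 2))
        (fun Y => ∃ v : Fin l → ZMod 2, Z = (toeplitzMat l 0 Y)ᵀ.mulVec v)
      have hu : (Finset.univ : Finset (Fin (l + 0 - 1) → ZMod 2)).card = 2 ^ (l + 0 - 1) := by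
        simp [Finset.card_univ]
      rw [hu] at this
      exact_mod_cast this
    simpa using (div_le_one hpow).mpr h1
  set v : Fin l → ZMod 2 := fun i => Z (Sum.inr i) with hv
  -- key equivalence
  have key : ∀ Y : Fin (l + m - 1) → ZMod 2,
      (∃ w : Fin l → ZMod 2, Z = (toeplitzMat l m Y)ᵀ.mulVec w) ↔
      (∀ k : Fin m, ∑ i : Fin l,
          Y ⟨(i : ℕ) + (k : ℕ), by have := i.2; have := k.2; omega⟩ * v i = Z (Sum.inl k)) := by
    intro Y
    constructor
    · rintro ⟨w, hw⟩ k
      have hr : w = v := by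
        funext j
        have h := congrFun hw (Sum.inr j)
        simp [Matrix.mulVec, Matrix.transpose_apply, toeplitzMat, dotProduct, ite_mul] at h
        simp [hv, h]
      have h := congrFun hw (Sum.inl k)
      rw [hr] at h
      rw [h]
      symm
      simp [Matrix.mulVec, Matrix.transpose_apply, toeplitzMat, dotProduct]
    · intro h
      refine ⟨v, ?_⟩
      funext j
      cases j with
      | inl k =>
        rw [← h k]
        simp [Matrix.mulVec, Matrix.transpose_apply, toeplitzMat, dotProduct]
      | inr j =>
        simp [Matrix.mulVec, Matrix.transpose_apply, toeplitzMat, dotProduct, ite_mul, hv]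
  have hfil : (Finset.univ.filter (fun Y : Fin (l + m - 1) → ZMod 2 =>
        ∃ w : Fin l → ZMod 2, Z = (toeplitzMat l m Y)ᵀ.mulVec w))
      = Finset.univ.filter (fun Y : Fin (l + m - 1) → ZMod 2 =>
        ∀ k : Fin m, ∑ i : Fin l,
          Y ⟨(i : ℕ) + (k : ℕ), by have := i.2; have := k.2; omega⟩ * v i = Z (Sum.inl k)) :=
    Finset.filter_congr (fun Y _ => by simpa using key Y)
  rw [hfil]
  set S := Finset.univ.filter (fun Y : Fin (l + m - 1) → ZMod 2 =>
        ∀ k : Fin m, ∑ i : Fin l,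
          Y ⟨(i : ℕ) + (k : ℕ), by have := i.2; have := k.2; omega⟩ * v i = Z (Sum.inl k))
    with hS
  by_cases hv0 : v = 0
  · -- some Z (inl k) ≠ 0, so S is empty
    have hk : ∃ k : Fin m, Z (Sum.inl k) ≠ 0 := by
      by_contra hc
      push_neg at hc
      apply hZ
      funext j
      cases j with
      | inl k => exact hc k
      | inr j => exact congrFun hv0 j
    obtain ⟨k, hk⟩ := hk
    have hSe : S = ∅ := by
      rw [hS, Finset.filter_eq_empty_iff]
      intro Y _
      push_neg
      refine ⟨k, ?_⟩
      rw [hv0]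
      simpa using (Ne.symm hk)
    rw [hSe]
    simp only [Finset.card_empty, Nat.cast_zero, zero_div]
    positivity
  · -- v ≠ 0 : injectivity argument
    have hne : (Finset.univ.filter (fun i => v i ≠ 0)).Nonempty := by
      obtain ⟨i, hi⟩ := Function.ne_iff.mp hv0
      exact ⟨i, by simpa using hi⟩
    set i0 := (Finset.univ.filter (fun i => v i ≠ 0)).max' hne with hi0
    have hvi0 : v i0 = 1 := by
      have := (Finset.mem_filter.mp ((Finset.univ.filter (fun i => v i ≠ 0)).max'_mem hne)).2
      revert this; generalize v i0 = a; revert a; decide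
    have hmax : ∀ i : Fin l, i0 < i → v i = 0 := by
      intro i hi
      by_contra hvi
      have : i ≤ i0 := Finset.le_max' _ i (by simpa using hvi)
      exact absurd hi (not_lt.mpr this)
    have hl : 0 < l := i0.pos
    have hm1 : 1 ≤ m := Nat.one_le_iff_ne_zero.mpr hm
    set T : Finset (Fin (l + m - 1)) := (Finset.univ : Finset (Fin m)).image
        (fun k : Fin m =>
          (⟨(i0 : ℕ) + (k : ℕ), by have := i0.2; have := k.2; omega⟩ : Fin (l + m - 1)))
      with hT
    have hTcard : T.card = m := by
      rw [hT, Finset.card_image_of_injective _ ?_, Finset.card_univ, Fintype.card_fin]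
      intro k1 k2 h
      have := congrArg Fin.val h
      simp at this
      exact Fin.ext this
    have hinj : Set.InjOn (fun (Y : Fin (l + m - 1) → ZMod 2) =>
        (fun t : {t : Fin (l + m - 1) // t ∉ T} => Y t.1)) S := by
      intro Y hY Y' hY' hres
      have hYs := (Finset.mem_filter.mp hY).2
      have hY's := (Finset.mem_filter.mp hY').2
      set D : Fin (l + m - 1) → ZMod 2 := fun t => Y t - Y' t with hD
      have hD0 : ∀ t : Fin (l + m - 1), t ∉ T → D t = 0 := by
        intro t ht
        have := congrFun hres ⟨t, ht⟩
        simpa [hD, sub_eq_zero] using this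
      have hDeq : ∀ k : Fin m, ∑ i : Fin l,
          D ⟨(i : ℕ) + (k : ℕ), by have := i.2; have := k.2; omega⟩ * v i = 0 := by
        intro k
        have : ∑ i : Fin l,
            D ⟨(i : ℕ) + (k : ℕ), by have := i.2; have := k.2; omega⟩ * v i
            = (∑ i : Fin l,
                Y ⟨(i : ℕ) + (k : ℕ), by have := i.2; have := k.2; omega⟩ * v i)
              - ∑ i : Fin l,
                Y' ⟨(i : ℕ) + (k : ℕ), by have := i.2; have := k.2; omega⟩ * v i := by
          rw [← Finset.sum_sub_distrib]
          exact Finset.sum_congr rfl (fun i _ => by rw [hD, sub_mul])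
        rw [this, hYs k, hY's k, sub_self]
      have hzero : ∀ t : ℕ, ∀ ht : t < l + m - 1, D ⟨t, ht⟩ = 0 := by
        intro t
        induction t using Nat.strong_induction_on with
        | _ t ih =>
          intro ht
          by_cases hTt : (⟨t, ht⟩ : Fin (l + m - 1)) ∈ T
          · obtain ⟨k, -, hk⟩ := Finset.mem_image.mp hTt
            have hkt : (i0 : ℕ) + (k : ℕ) = t := congrArg Fin.val hk
            have hsum := hDeq k
            have hsingle : ∑ i : Fin l,
                D ⟨(i : ℕ) + (k : ℕ), by have := i.2; have := k.2; omega⟩ * v i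
                = D ⟨(i0 : ℕ) + (k : ℕ), by have := i0.2; have := k.2; omega⟩ * v i0 := by
              apply Finset.sum_eq_single_of_mem i0 (Finset.mem_univ i0)
              intro i _ hii0
              rcases lt_or_gt_of_ne hii0 with hlt | hgt
              · have hik : (i : ℕ) + (k : ℕ) < t := by
                  have : (i : ℕ) < (i0 : ℕ) := hlt
                  omega
                rw [ih ((i : ℕ) + (k : ℕ)) hik (by omega), zero_mul]
              · rw [hmax i hgt, mul_zero]
            rw [hsingle, hvi0, mul_one] at hsum
            have heq : (⟨(i0 : ℕ) + (k : ℕ), by have := i0.2; have := k.2; omega⟩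
                : Fin (l + m - 1)) = ⟨t, ht⟩ := Fin.ext hkt
            rwa [heq] at hsum
          · exact hD0 _ hTt
      funext t
      have := hzero t.1 t.2
      rw [hD] at this
      simpa [sub_eq_zero] using this
    have hcard : S.card ≤ 2 ^ (l + m - 1 - m) := by
      have h1 := Finset.card_le_card_of_injOn
        (fun (Y : Fin (l + m - 1) → ZMod 2) =>
          (fun t : {t : Fin (l + m - 1) // t ∉ T} => Y t.1))
        (fun Y _ => Finset.mem_univ _) hinj
      rw [Finset.card_univ, Fintype.card_fun] at h1
      have hsub : Fintype.card {t : Fin (l + m - 1) // t ∉ T} = l + m - 1 - m := by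
        have h2 : Fintype.card {t : Fin (l + m - 1) // t ∉ T}
            = Fintype.card (Fin (l + m - 1)) - Fintype.card {t : Fin (l + m - 1) // t ∈ T} := by
          exact Fintype.card_subtype_compl _
        rw [h2, Fintype.card_fin]
        congr 1
        exact (Fintype.card_coe T).trans hTcard
      rw [hsub] at h1
      simpa using h1
    have hcR : (S.card : ℝ) ≤ 2 ^ (l + m - 1 - m) := by exact_mod_cast hcard
    rw [div_le_iff₀ hpow]
    have hsplit : ((2 : ℝ) ^ m)⁻¹ * 2 ^ (l + m - 1) = 2 ^ (l + m - 1 - m) := by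
      rw [show l + m - 1 = (l + m - 1 - m) + m by omega, pow_add]
      field_simp
      congr 1
      omega
    rw [hsplit]
    exact hcR
end

section
/- Let $Z=(x,y)^T \in \mathbb{F}_2^m \oplus \mathbb{F}_2^l$ with $y \neq 0$. For a random Toeplitz matrix $({\bf X},I)$ with $X_{i,j}=Y_{i+j-1}$ and $Y_1,\ldots,Y_{l+m-1}$ independent uniform bits, the probability that $(x,y)^T = ({\bf X}^T y, y)$ equals exactly $2^{-m}$. -/
open Finset Matrix

open Classical in
/-- If `Z = (x, y)ᵀ` with `y ≠ 0`, then for a random Toeplitz matrix `(X, I)` with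
i.i.d. uniform bits `Y`, the probability that `(x, y)ᵀ = (Xᵀ y, y)`, i.e. that `Z` lies
in the image of `(X, I)ᵀ` applied to `y`, equals exactly `2^{-m}`. -/
theorem toeplitz_image_prob_eq (l m : ℕ) (x : Fin m → ZMod 2) (y : Fin l → ZMod 2)
    (hy : y ≠ 0) :
    ((Finset.univ.filter (fun Y : Fin (l + m - 1) → ZMod 2 =>
        Sum.elim x y = (toeplitzMat l m Y)ᵀ.mulVec y)).card : ℝ)
      / 2 ^ (l + m - 1) = ((2 : ℝ) ^ m)⁻¹ := by
  classical
  have hl : 0 < l := by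
    rcases Nat.eq_zero_or_pos l with h | h
    · subst h; exact absurd (Subsingleton.elim y 0) hy
    · exact h
  -- the map f Y k = ∑ i, y i * Y (i+k)
  let f : (Fin (l + m - 1) → ZMod 2) → (Fin m → ZMod 2) :=
    fun Y k => ∑ i : Fin l, y i * Y ⟨(i : ℕ) + (k : ℕ), by
        have := i.2; have := k.2; omega⟩
  have hadd : ∀ Y Z, f (Y + Z) = f Y + f Z := by
    intro Y Z; funext k
    simp only [f, Pi.add_apply, mul_add, Finset.sum_add_distrib]
  have hsub : ∀ Y Z, f (Y - Z) = f Y - f Z := by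
    intro Y Z; funext k
    simp only [f, Pi.sub_apply, mul_sub, Finset.sum_sub_distrib]
  -- the condition in the filter is equivalent to f Y = x
  have hcond : ∀ Y : Fin (l + m - 1) → ZMod 2,
      (Sum.elim x y = (toeplitzMat l m Y)ᵀ.mulVec y) ↔ f Y = x := by
    intro Y
    have hmv : ∀ j, ((toeplitzMat l m Y)ᵀ.mulVec y) j
        = ∑ i : Fin l, toeplitzMat l m Y i j * y i := by
      intro j; rfl
    constructor
    · intro h; funext k
      have := congrFun h (Sum.inl k)
      rw [hmv] at this
      simp only [Sum.elim_inl] at this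
      rw [this]
      exact Finset.sum_congr rfl fun i _ => by
        simp [toeplitzMat, mul_comm]
    · intro h; funext j
      cases j with
      | inl k =>
        rw [hmv]
        simp only [Sum.elim_inl, ← h]
        exact Finset.sum_congr rfl fun i _ => by
          simp [toeplitzMat, f, mul_comm]
      | inr k =>
        rw [hmv]
        simp [toeplitzMat, ite_mul, Finset.sum_ite_eq]
  -- pick the maximal index j0 with y j0 ≠ 0
  have hex : ∃ j, y j ≠ 0 := Function.ne_iff.mp hy
  set s : Finset (Fin l) := Finset.univ.filter (fun j => y j ≠ 0) with hs_def
  have hsne : s.Nonempty := ⟨hex.choose, by simp [hs_def, hex.choose_spec]⟩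
  set j0 : Fin l := s.max' hsne with hj0_def
  have hj0 : y j0 ≠ 0 := by
    have h := s.max'_mem hsne
    exact (Finset.mem_filter.mp h).2
  have hy1 : y j0 = 1 := by
    revert hj0; generalize y j0 = a; revert a; decide
  have hmax : ∀ j : Fin l, j0 < j → y j = 0 := by
    intro j hj
    by_contra h
    exact absurd (s.le_max' j (by simp [hs_def, h])) (not_le.mpr hj)
  -- the triangular matrix M
  let M : Matrix (Fin m) (Fin m) (ZMod 2) :=
    fun k' k => ∑ i : Fin l, y i *
      (if (i : ℕ) + (k' : ℕ) = (j0 : ℕ) + (k : ℕ) then 1 else 0)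
  have hMdiag : ∀ k, M k k = 1 := by
    intro k
    have h1 : M k k = ∑ i : Fin l, if i = j0 then y i else 0 := by
      refine Finset.sum_congr rfl fun i _ => ?_
      by_cases h : i = j0
      · subst h; simp
      · have hne : ¬((i : ℕ) + (k : ℕ) = (j0 : ℕ) + (k : ℕ)) := by
          intro hc
          exact h (Fin.ext (by omega))
        rw [if_neg hne, if_neg h, mul_zero]
    rw [h1]
    simp [hy1]
  have hMtri : ∀ k' k : Fin m, k' < k → M k' k = 0 := by
    intro k' k hkk
    apply Finset.sum_eq_zero
    intro i _
    by_cases h : (i : ℕ) + (k' : ℕ) = (j0 : ℕ) + (k : ℕ)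
    · have hkk' : (k' : ℕ) < (k : ℕ) := hkk
      have hgt : j0 < i := show (j0 : ℕ) < (i : ℕ) by omega
      simp [hmax i hgt]
    · simp [h]
  have hMdet : IsUnit M.det := by
    rw [Matrix.det_of_lowerTriangular M (fun i j hij => hMtri i j hij)]
    simp [hMdiag]
  -- surjectivity of f
  have hsurj : ∀ t : Fin m → ZMod 2, ∃ Y, f Y = t := by
    intro t
    set v : Fin m → ZMod 2 := M⁻¹.mulVec t with hv
    refine ⟨fun p => ∑ k : Fin m, v k *
      (if (p : ℕ) = (j0 : ℕ) + (k : ℕ) then 1 else 0), ?_⟩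
    funext k'
    have key : f (fun p => ∑ k : Fin m, v k *
        (if (p : ℕ) = (j0 : ℕ) + (k : ℕ) then 1 else 0)) k' = M.mulVec v k' := by
      show (∑ i : Fin l, y i * ∑ k : Fin m, v k *
        (if (i : ℕ) + (k' : ℕ) = (j0 : ℕ) + (k : ℕ) then 1 else 0))
        = ∑ k : Fin m, M k' k * v k
      calc (∑ i : Fin l, y i * ∑ k : Fin m, v k *
            (if (i : ℕ) + (k' : ℕ) = (j0 : ℕ) + (k : ℕ) then 1 else 0))
          = ∑ i : Fin l, ∑ k : Fin m, y i * (v k *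
            (if (i : ℕ) + (k' : ℕ) = (j0 : ℕ) + (k : ℕ) then 1 else 0)) := by
            exact Finset.sum_congr rfl fun i _ => Finset.mul_sum _ _ _
        _ = ∑ k : Fin m, ∑ i : Fin l, y i * (v k *
            (if (i : ℕ) + (k' : ℕ) = (j0 : ℕ) + (k : ℕ) then 1 else 0)) :=
            Finset.sum_comm
        _ = ∑ k : Fin m, (∑ i : Fin l, y i *
            (if (i : ℕ) + (k' : ℕ) = (j0 : ℕ) + (k : ℕ) then 1 else 0)) * v k := by
            refine Finset.sum_congr rfl fun k _ => ?_
            rw [Finset.sum_mul]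
            exact Finset.sum_congr rfl fun i _ => by ring
        _ = ∑ k : Fin m, M k' k * v k := rfl
    rw [key, hv, Matrix.mulVec_mulVec, Matrix.mul_nonsing_inv M hMdet,
      Matrix.one_mulVec]
  -- all fibers of f have the same cardinality
  obtain ⟨Y0, hY0⟩ := hsurj x
  have hfiber : ∀ t : Fin m → ZMod 2,
      (Finset.univ.filter (fun Y => f Y = t)).card
        = (Finset.univ.filter (fun Y => f Y = x)).card := by
    intro t
    obtain ⟨Yt, hYt⟩ := hsurj t
    apply Finset.card_bij' (fun Y _ => Y - Yt + Y0) (fun Y _ => Y - Y0 + Yt)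
    · intro Y hY
      rw [Finset.mem_filter] at hY ⊢
      refine ⟨Finset.mem_univ _, ?_⟩
      rw [hadd, hsub, hY.2, hYt, hY0]
      abel
    · intro Y hY
      rw [Finset.mem_filter] at hY ⊢
      refine ⟨Finset.mem_univ _, ?_⟩
      rw [hadd, hsub, hY.2, hYt, hY0]
      abel
    · intro Y _; abel
    · intro Y _; abel
  -- counting
  have hsum : (Fintype.card (Fin (l + m - 1) → ZMod 2))
      = ∑ t : Fin m → ZMod 2, (Finset.univ.filter (fun Y => f Y = t)).card := by
    rw [← Finset.card_univ]
    exact Finset.card_eq_sum_card_fiberwise (fun Y _ => Finset.mem_univ (f Y))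
  have hcount : 2 ^ (l + m - 1)
      = 2 ^ m * (Finset.univ.filter (fun Y => f Y = x)).card := by
    have h1 : (Fintype.card (Fin (l + m - 1) → ZMod 2)) = 2 ^ (l + m - 1) := by
      simp
    have h2 : ∑ t : Fin m → ZMod 2, (Finset.univ.filter (fun Y => f Y = t)).card
        = 2 ^ m * (Finset.univ.filter (fun Y => f Y = x)).card := by
      rw [Finset.sum_congr rfl fun t _ => hfiber t, Finset.sum_const,
        Finset.card_univ, smul_eq_mul]
      congr 1
      simp
    rw [← h1, hsum, h2]
  -- the filter in the statement equals the fiber over x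
  have hfilter_eq : (Finset.univ.filter (fun Y : Fin (l + m - 1) → ZMod 2 =>
      Sum.elim x y = (toeplitzMat l m Y)ᵀ.mulVec y))
      = Finset.univ.filter (fun Y => f Y = x) := by
    apply Finset.filter_congr
    intro Y _
    simp only [hcond Y]
  rw [hfilter_eq]
  -- real arithmetic
  have hR : (2 : ℝ) ^ (l + m - 1)
      = 2 ^ m * ((Finset.univ.filter (fun Y => f Y = x)).card : ℝ) := by
    exact_mod_cast congrArg (Nat.cast : ℕ → ℝ) hcount
  have hN : ((Finset.univ.filter (fun Y => f Y = x)).card : ℝ) ≠ 0 := by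
    intro h
    rw [h, mul_zero] at hR
    exact (by positivity : (0:ℝ) < 2 ^ (l + m - 1)).ne' hR
  rw [hR, mul_comm, div_mul_eq_div_div, div_self hN, one_div]
end

section
/- For any two density operators $\rho, \rho'$ on a finite-dimensional Hilbert space, the trace distance satisfies $\|\rho - \rho'\|_1 \geq 2(1 - F(\rho,\rho'))$, where $F(\rho,\rho') = \mathrm{Tr}\sqrt{\sqrt{\rho'}\rho\sqrt{\rho'}}$ is the fidelity. -/
open Matrix
open scoped ComplexOrder

open Classical in
/-- The positive-semidefinite square root of a matrix (junk value `0` off the PSD cone). -/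
noncomputable def msqrt {ι : Type*} [Fintype ι] [DecidableEq ι]
    (A : Matrix ι ι ℂ) : Matrix ι ι ℂ :=
  if h : A.PosSemidef then
    (h.1.eigenvectorUnitary : Matrix ι ι ℂ) * diagonal ((↑) ∘ Real.sqrt ∘ h.1.eigenvalues) *
      (star h.1.eigenvectorUnitary : Matrix ι ι ℂ) else 0

/-- The trace norm `‖A‖₁ = Tr √(Aᴴ A)`. -/
noncomputable def traceNorm {ι : Type*} [Fintype ι] [DecidableEq ι]
    (A : Matrix ι ι ℂ) : ℝ :=
  ((msqrt (Aᴴ * A)).trace).re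

/-- The Uhlmann fidelity `F(ρ, ρ') = Tr √(√ρ' ρ √ρ')`. -/
noncomputable def fidelity {ι : Type*} [Fintype ι] [DecidableEq ι]
    (ρ ρ' : Matrix ι ι ℂ) : ℝ :=
  ((msqrt (msqrt ρ' * ρ * msqrt ρ')).trace).re

section Helpers

variable {ι : Type*} [Fintype ι] [DecidableEq ι]

open scoped MatrixOrder

lemma msqrt_eq {A : Matrix ι ι ℂ} (h : A.PosSemidef) : msqrt A = CFC.sqrt A := by
  rw [CFC.sqrt_eq_real_sqrt A h.nonneg, cfcₙ_eq_cfc (hf0 := Real.sqrt_zero), h.1.cfc_eq]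
  rw [msqrt, dif_pos h]; rfl

lemma msqrt_psd {A : Matrix ι ι ℂ} (h : A.PosSemidef) : (msqrt A).PosSemidef := by
  rw [msqrt_eq h]; exact (CFC.sqrt_nonneg A).posSemidef

lemma msqrt_mul_self {A : Matrix ι ι ℂ} (h : A.PosSemidef) : msqrt A * msqrt A = A := by
  rw [msqrt_eq h]; exact CFC.sqrt_mul_sqrt_self A h.nonneg

lemma msqrt_eq_of_sq {A B : Matrix ι ι ℂ} (hB : B.PosSemidef) (hA : A.PosSemidef)
    (h : A ^ 2 = B) : msqrt B = A := by
  rw [msqrt_eq hB, ← h]; exact CFC.sqrt_sq A hA.nonneg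

lemma unit_star_mul (V : Matrix ι ι ℂ) (hV : V ∈ Matrix.unitaryGroup ι ℂ) : Vᴴ * V = 1 := by
  rw [← star_eq_conjTranspose]; exact (Matrix.mem_unitaryGroup_iff'.mp hV)

lemma unit_mul_star (V : Matrix ι ι ℂ) (hV : V ∈ Matrix.unitaryGroup ι ℂ) : V * Vᴴ = 1 := by
  rw [← star_eq_conjTranspose]; exact (Matrix.mem_unitaryGroup_iff.mp hV)

lemma trace_sandwich (V : Matrix ι ι ℂ) (d : ι → ℂ) (M : Matrix ι ι ℂ) :
    (V * diagonal d * Vᴴ * M).trace = ∑ i, d i * (Vᴴ * M * V) i i := by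
  have h : (V * diagonal d * Vᴴ * M).trace = ((Vᴴ * M * V) * diagonal d).trace := by
    rw [show V * diagonal d * Vᴴ * M = (V * diagonal d) * (Vᴴ * M) by noncomm_ring,
      trace_mul_comm, show Vᴴ * M * (V * diagonal d) = (Vᴴ * M * V) * diagonal d by noncomm_ring]
  rw [h]
  simp [trace, mul_apply, diagonal_apply, diag, mul_comm]

lemma sandwich_entry (W : Matrix ι ι ℂ) (d : ι → ℂ) (i : ι) :
    (W * diagonal d * Wᴴ) i i = ∑ j, d j * Complex.ofReal (Complex.normSq (W i j)) := by
  rw [mul_apply]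
  simp only [mul_diagonal, conjTranspose_apply, RCLike.star_def]
  refine Finset.sum_congr rfl fun j _ => ?_
  rw [show W i j * d j * (starRingEnd ℂ) (W i j) = d j * (W i j * (starRingEnd ℂ) (W i j)) by ring,
    Complex.mul_conj]

lemma col_entry (N V : Matrix ι ι ℂ) (j : ι) :
    (Vᴴ * N * V) j j = dotProduct (star (fun k => V k j)) (N *ᵥ (fun k => V k j)) := by
  simp only [mul_apply, conjTranspose_apply, dotProduct, mulVec, Pi.star_apply,
    Finset.sum_mul, Finset.mul_sum]
  rw [Finset.sum_comm]
  exact Finset.sum_congr rfl fun k _ => Finset.sum_congr rfl fun l _ => by ring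

lemma diag_sq_entry (V P : Matrix ι ι ℂ) (p : ι → ℝ)
    (hVV : V * Vᴴ = 1)
    (hdiag : Vᴴ * P * V = diagonal (fun i => Complex.ofReal (p i))) (j : ι) :
    (Vᴴ * (P * P) * V) j j = Complex.ofReal (p j ^ 2) := by
  have h : Vᴴ * (P * P) * V = (Vᴴ * P * V) * (Vᴴ * P * V) := by
    rw [show (Vᴴ * P * V) * (Vᴴ * P * V) = Vᴴ * P * (V * Vᴴ) * P * V by noncomm_ring, hVV]
    noncomm_ring
  rw [h, hdiag, diagonal_mul_diagonal, diagonal_apply_eq]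
  push_cast
  ring

lemma trace_herm_re {A : Matrix ι ι ℂ} (hA : A.IsHermitian) :
    A.trace.re = ∑ i, hA.eigenvalues i := by
  conv_lhs => rw [hA.spectral_theorem]
  rw [Unitary.conjStarAlgAut_apply, trace_mul_cycle, Unitary.coe_star_mul_self, one_mul, trace_diagonal]
  rw [Complex.re_sum]
  simp

/-- The trace norm of a Hermitian matrix is the sum of the absolute values of its
eigenvalues. -/
lemma traceNorm_hermitian {Δ : Matrix ι ι ℂ} (hΔ : Δ.IsHermitian) :
    traceNorm Δ = ∑ i, |hΔ.eigenvalues i| := by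
  set U : Matrix ι ι ℂ := ↑(hΔ.eigenvectorUnitary)
  have hU : U ∈ Matrix.unitaryGroup ι ℂ := hΔ.eigenvectorUnitary.2
  set μ := hΔ.eigenvalues
  have hspec : Δ = U * diagonal (RCLike.ofReal ∘ μ) * Uᴴ := by
    simpa [star_eq_conjTranspose] using hΔ.spectral_theorem
  set Y : Matrix ι ι ℂ := U * diagonal (fun i => Complex.ofReal |μ i|) * Uᴴ with hYdef
  have hYpsd : Y.PosSemidef := by
    apply Matrix.PosSemidef.mul_mul_conjTranspose_same _ U
    rw [posSemidef_diagonal_iff]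
    intro i
    exact Complex.zero_le_real.2 (abs_nonneg _)
  have hsq : Y ^ 2 = Δᴴ * Δ := by
    rw [hΔ.eq, pow_two, hYdef, hspec]
    calc U * diagonal (fun i => Complex.ofReal |μ i|) * Uᴴ
          * (U * diagonal (fun i => Complex.ofReal |μ i|) * Uᴴ)
        = U * diagonal (fun i => Complex.ofReal |μ i|) * (Uᴴ * U)
          * diagonal (fun i => Complex.ofReal |μ i|) * Uᴴ := by
          noncomm_ring
      _ = U * (diagonal (fun i => Complex.ofReal |μ i|)
            * diagonal (fun i => Complex.ofReal |μ i|)) * Uᴴ := by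
          rw [unit_star_mul U hU]; noncomm_ring
      _ = U * (diagonal (RCLike.ofReal ∘ μ) * diagonal (RCLike.ofReal ∘ μ)) * Uᴴ := by
          have hdd : (fun i => Complex.ofReal |μ i| * Complex.ofReal |μ i|)
              = fun i => (RCLike.ofReal ∘ μ) i * (RCLike.ofReal ∘ μ) i := by
            funext i
            simp only [Function.comp_apply]
            norm_cast
            exact congrArg _ (abs_mul_abs_self _)
          rw [diagonal_mul_diagonal, diagonal_mul_diagonal, hdd]
      _ = U * diagonal (RCLike.ofReal ∘ μ) * (Uᴴ * U) * diagonal (RCLike.ofReal ∘ μ) * Uᴴ := by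
          rw [unit_star_mul U hU]; noncomm_ring
      _ = U * diagonal (RCLike.ofReal ∘ μ) * Uᴴ * (U * diagonal (RCLike.ofReal ∘ μ) * Uᴴ) := by
          noncomm_ring
  have hmsqrt : msqrt (Δᴴ * Δ) = Y := by
    have hpsd : (Δᴴ * Δ).PosSemidef := posSemidef_conjTranspose_mul_self Δ
    exact msqrt_eq_of_sq hpsd hYpsd hsq
  rw [traceNorm, hmsqrt, hYdef]
  rw [trace_mul_cycle, unit_star_mul U hU, one_mul, trace_diagonal]
  push_cast
  simp

/-- Trace against a unitary conjugate of a contraction diagonal is bounded by the trace norm. -/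
lemma trace_contraction_le {Δ : Matrix ι ι ℂ} (hΔ : Δ.IsHermitian) (V : Matrix ι ι ℂ)
    (hV : V ∈ Matrix.unitaryGroup ι ℂ) (s : ι → ℝ) (hs : ∀ i, |s i| ≤ 1) :
    ((V * diagonal (fun i => Complex.ofReal (s i)) * Vᴴ * Δ).trace).re ≤ traceNorm Δ := by
  set U : Matrix ι ι ℂ := ↑(hΔ.eigenvectorUnitary) with hUdef
  have hU : U ∈ Matrix.unitaryGroup ι ℂ := hΔ.eigenvectorUnitary.2
  set μ := hΔ.eigenvalues with hμdef
  set W := Vᴴ * U with hWdef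
  have hWmem : W ∈ Matrix.unitaryGroup ι ℂ := by
    have hVs : star V ∈ Matrix.unitaryGroup ι ℂ := by
      rw [Matrix.mem_unitaryGroup_iff, star_star]
      exact Matrix.mem_unitaryGroup_iff'.mp hV
    rw [hWdef, ← star_eq_conjTranspose]
    exact mul_mem hVs hU
  have hWW : Wᴴ * W = 1 := unit_star_mul W hWmem
  have hcol : ∀ j, ∑ i, Complex.normSq (W i j) = 1 := by
    intro j
    have h1 : (Wᴴ * W) j j = 1 := by rw [hWW, one_apply_eq]
    rw [mul_apply] at h1
    simp only [conjTranspose_apply, RCLike.star_def] at h1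
    have := congrArg Complex.re h1
    rw [Complex.re_sum] at this
    simpa [Complex.normSq_apply] using this
  have hVΔV : Vᴴ * Δ * V = W * diagonal (RCLike.ofReal ∘ μ) * Wᴴ := by
    have hspec : Δ = U * diagonal (RCLike.ofReal ∘ μ) * Uᴴ := by
      simpa [star_eq_conjTranspose] using hΔ.spectral_theorem
    rw [hWdef, conjTranspose_mul, conjTranspose_conjTranspose]
    rw [hspec]
    noncomm_ring
  rw [trace_sandwich]
  have hterm : ∀ i, (Vᴴ * Δ * V) i i
      = ∑ j, (μ j : ℂ) * Complex.ofReal (Complex.normSq (W i j)) := by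
    intro i
    rw [hVΔV, sandwich_entry]
    rfl
  have hre : (∑ i, Complex.ofReal (s i) * (Vᴴ * Δ * V) i i).re
      = ∑ i, ∑ j, s i * (μ j * Complex.normSq (W i j)) := by
    rw [Complex.re_sum]
    refine Finset.sum_congr rfl fun i _ => ?_
    rw [hterm i, Finset.mul_sum, Complex.re_sum]
    refine Finset.sum_congr rfl fun j _ => ?_
    rw [show Complex.ofReal (s i) * ((μ j : ℂ) * Complex.ofReal (Complex.normSq (W i j)))
      = Complex.ofReal (s i * (μ j * Complex.normSq (W i j))) by push_cast; ring]
    exact Complex.ofReal_re _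
  rw [hre, traceNorm_hermitian hΔ]
  calc ∑ i, ∑ j, s i * (μ j * Complex.normSq (W i j))
      ≤ ∑ i, ∑ j, |μ j| * Complex.normSq (W i j) := by
        refine Finset.sum_le_sum fun i _ => Finset.sum_le_sum fun j _ => ?_
        rw [show s i * (μ j * Complex.normSq (W i j)) = (s i * μ j) * Complex.normSq (W i j) by
          ring]
        refine mul_le_mul_of_nonneg_right ?_ (Complex.normSq_nonneg _)
        calc s i * μ j ≤ |s i * μ j| := le_abs_self _
          _ = |s i| * |μ j| := abs_mul _ _
          _ ≤ 1 * |μ j| := mul_le_mul_of_nonneg_right (hs i) (abs_nonneg _)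
          _ = |μ j| := one_mul _
    _ = ∑ j, |μ j| := by
        rw [Finset.sum_comm]
        refine Finset.sum_congr rfl fun j _ => ?_
        rw [← Finset.mul_sum, hcol j, mul_one]

/-- The real part of the trace is at most the trace norm. -/
lemma re_trace_le_trace_msqrt (T : Matrix ι ι ℂ) :
    (T.trace).re ≤ ((msqrt (Tᴴ * T)).trace).re := by
  have hX : (Tᴴ * T).PosSemidef := posSemidef_conjTranspose_mul_self T
  set P := msqrt (Tᴴ * T) with hPdef
  have hPpsd : P.PosSemidef := msqrt_psd hX
  have hPP : P * P = Tᴴ * T := msqrt_mul_self hX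
  have hPH := hPpsd.1
  set V : Matrix ι ι ℂ := ↑(hPH.eigenvectorUnitary) with hVdef
  have hV : V ∈ Matrix.unitaryGroup ι ℂ := hPH.eigenvectorUnitary.2
  set p := hPH.eigenvalues with hpdef
  have hp : ∀ j, 0 ≤ p j := fun j => hPpsd.eigenvalues_nonneg j
  have hdiag : Vᴴ * P * V = diagonal (fun i => Complex.ofReal (p i)) := by
    have := hPH.conjStarAlgAut_star_eigenvectorUnitary
    rw [Unitary.conjStarAlgAut_star_apply, star_eq_conjTranspose] at this
    exact this
  have htr : (Vᴴ * T * V).trace = T.trace := by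
    rw [trace_mul_cycle, unit_mul_star V hV, one_mul]
  have hbound : ∀ j, ((Vᴴ * T * V) j j).re ≤ p j := by
    intro j
    set x0 : ι → ℂ := fun k => V k j with hx0
    set x : EuclideanSpace ℂ ι := (WithLp.equiv 2 _).symm x0 with hxdef
    set y : EuclideanSpace ℂ ι := (WithLp.equiv 2 _).symm (T *ᵥ x0) with hydef
    have hinner : (inner ℂ x y) = (Vᴴ * T * V) j j := by
      change dotProduct (T *ᵥ x0) (star x0) = _
      rw [dotProduct_comm, col_entry]
    have hxx : (inner ℂ x x) = 1 := by
      change dotProduct x0 (star x0) = 1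
      rw [dotProduct_comm]
      have h1 : (Vᴴ * (1 : Matrix ι ι ℂ) * V) j j = (1 : Matrix ι ι ℂ) j j := by
        rw [mul_one, unit_star_mul V hV]
      rw [col_entry] at h1
      rw [one_apply_eq] at h1
      simpa using h1
    have hyy : (inner ℂ y y) = Complex.ofReal (p j ^ 2) := by
      change dotProduct (T *ᵥ x0) (star (T *ᵥ x0)) = _
      rw [dotProduct_comm]
      have h2 : dotProduct (star (T *ᵥ x0)) (T *ᵥ x0)
          = dotProduct (star x0) ((Tᴴ * T) *ᵥ x0) := by
        rw [star_mulVec, ← mulVec_mulVec, dotProduct_mulVec, vecMul_vecMul,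
          mulVec_mulVec, dotProduct_mulVec]
      rw [h2, ← hPP, ← col_entry, diag_sq_entry V P p (unit_mul_star V hV) hdiag]
    have hnx : ‖x‖ = 1 := by
      rw [inner_self_eq_norm_sq_to_K (𝕜 := ℂ)] at hxx
      norm_cast at hxx
      rw [← RCLike.ofReal_one (K := ℂ)] at hxx
      have h4 : ‖x‖ ^ 2 = 1 := RCLike.ofReal_inj.mp hxx
      nlinarith [norm_nonneg x]
    have hny : ‖y‖ = p j := by
      rw [inner_self_eq_norm_sq_to_K (𝕜 := ℂ)] at hyy
      norm_cast at hyy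
      have h4 : ‖y‖ ^ 2 = p j ^ 2 := RCLike.ofReal_inj.mp hyy
      nlinarith [norm_nonneg y, hp j]
    calc ((Vᴴ * T * V) j j).re = (inner ℂ x y).re := by rw [hinner]
      _ ≤ ‖(inner ℂ x y)‖ := Complex.re_le_norm _
      _ ≤ ‖x‖ * ‖y‖ := norm_inner_le_norm x y
      _ = p j := by rw [hnx, hny, one_mul]
  have hPtr : P.trace.re = ∑ j, p j := trace_herm_re hPH
  rw [← htr, hPtr, trace, Complex.re_sum]
  exact Finset.sum_le_sum fun j _ => hbound j

end Helpers

/-- For density operators `ρ, ρ'` on a finite-dimensional Hilbert space,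
`‖ρ - ρ'‖₁ ≥ 2 (1 - F(ρ, ρ'))`. -/
theorem traceNorm_ge_two_mul_one_sub_fidelity {n : ℕ}
    (ρ ρ' : Matrix (Fin n) (Fin n) ℂ)
    (hρ : ρ.PosSemidef) (hρtr : ρ.trace = 1)
    (hρ' : ρ'.PosSemidef) (hρ'tr : ρ'.trace = 1) :
    traceNorm (ρ - ρ') ≥ 2 * (1 - fidelity ρ ρ') := by
  set A := msqrt ρ with hAdef
  set B := msqrt ρ' with hBdef
  have hA : A.PosSemidef := msqrt_psd hρ
  have hB : B.PosSemidef := msqrt_psd hρ'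
  have hA2 : A * A = ρ := msqrt_mul_self hρ
  have hB2 : B * B = ρ' := msqrt_mul_self hρ'
  set C := A - B with hCdef
  set M := A + B with hMdef
  have hC : C.IsHermitian := hA.1.sub hB.1
  have hΔ : (ρ - ρ').IsHermitian := hρ.1.sub hρ'.1
  set U : Matrix (Fin n) (Fin n) ℂ := ↑(hC.eigenvectorUnitary) with hUdef
  have hU : U ∈ Matrix.unitaryGroup (Fin n) ℂ := hC.eigenvectorUnitary.2
  set lam := hC.eigenvalues with hlamdef
  set s : Fin n → ℝ := fun i => if 0 ≤ lam i then 1 else -1 with hsdef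
  have hs : ∀ i, |s i| ≤ 1 := by
    intro i
    by_cases h : 0 ≤ lam i
    · simp only [hsdef]
      rw [if_pos h]
      norm_num
    · simp only [hsdef]
      rw [if_neg h]
      norm_num
  have hslam : ∀ i, s i * lam i = |lam i| := by
    intro i
    by_cases h : 0 ≤ lam i
    · simp only [hsdef]
      rw [if_pos h, one_mul, abs_of_nonneg h]
    · simp only [hsdef]
      rw [if_neg h, neg_one_mul, abs_of_neg (lt_of_not_ge h)]
  set S : Matrix (Fin n) (Fin n) ℂ :=
    U * diagonal (fun i => Complex.ofReal (s i)) * Uᴴ with hSdef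
  set K : Matrix (Fin n) (Fin n) ℂ :=
    U * diagonal (fun i => Complex.ofReal |lam i|) * Uᴴ with hKdef
  have hspecC : C = U * diagonal (RCLike.ofReal ∘ lam) * Uᴴ := by
    simpa [star_eq_conjTranspose] using hC.spectral_theorem
  have hdiagC : Uᴴ * C * U = diagonal (fun i => Complex.ofReal (lam i)) := by
    have := hC.conjStarAlgAut_star_eigenvectorUnitary
    rw [Unitary.conjStarAlgAut_star_apply, star_eq_conjTranspose] at this
    exact this
  -- Step 1: `traceNorm (ρ - ρ') ≥ re Tr (S (ρ - ρ'))`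
  have step1 : ((S * (ρ - ρ')).trace).re ≤ traceNorm (ρ - ρ') :=
    trace_contraction_le hΔ U hU s hs
  -- Step 2: `Tr (S (ρ - ρ')) = Tr (K M)`
  have hSC : S * C = K := by
    rw [hSdef, hKdef, hspecC]
    calc U * diagonal (fun i => Complex.ofReal (s i)) * Uᴴ
          * (U * diagonal (RCLike.ofReal ∘ lam) * Uᴴ)
        = U * diagonal (fun i => Complex.ofReal (s i)) * (Uᴴ * U)
          * diagonal (RCLike.ofReal ∘ lam) * Uᴴ := by noncomm_ring
      _ = U * (diagonal (fun i => Complex.ofReal (s i)) * diagonal (RCLike.ofReal ∘ lam)) * Uᴴ := by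
          rw [unit_star_mul U hU]; noncomm_ring
      _ = U * diagonal (fun i => Complex.ofReal |lam i|) * Uᴴ := by
          rw [diagonal_mul_diagonal]
          congr 1
          congr 1
          refine congrArg diagonal (funext fun i => ?_)
          simp only [Function.comp_apply]
          rw [show (RCLike.ofReal (lam i) : ℂ) = Complex.ofReal (lam i) from rfl]
          rw [← Complex.ofReal_mul, hslam i]
  have hCS : C * S = K := by
    rw [hSdef, hKdef, hspecC]
    calc U * diagonal (RCLike.ofReal ∘ lam) * Uᴴ
          * (U * diagonal (fun i => Complex.ofReal (s i)) * Uᴴ)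
        = U * diagonal (RCLike.ofReal ∘ lam) * (Uᴴ * U)
          * diagonal (fun i => Complex.ofReal (s i)) * Uᴴ := by noncomm_ring
      _ = U * (diagonal (RCLike.ofReal ∘ lam) * diagonal (fun i => Complex.ofReal (s i))) * Uᴴ := by
          rw [unit_star_mul U hU]; noncomm_ring
      _ = U * diagonal (fun i => Complex.ofReal |lam i|) * Uᴴ := by
          rw [diagonal_mul_diagonal]
          congr 1
          congr 1
          refine congrArg diagonal (funext fun i => ?_)
          simp only [Function.comp_apply]
          rw [show (RCLike.ofReal (lam i) : ℂ) = Complex.ofReal (lam i) from rfl]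
          rw [← Complex.ofReal_mul, mul_comm, hslam i]
  have hid : C * M + M * C = (ρ - ρ') + (ρ - ρ') := by
    rw [hCdef, hMdef, ← hA2, ← hB2]
    noncomm_ring
  have step2 : (S * (ρ - ρ')).trace = (K * M).trace := by
    have h2 : (S * (ρ - ρ')).trace + (S * (ρ - ρ')).trace
        = (K * M).trace + (K * M).trace := by
      calc (S * (ρ - ρ')).trace + (S * (ρ - ρ')).trace
          = (S * ((ρ - ρ') + (ρ - ρ'))).trace := by rw [mul_add, trace_add]
        _ = (S * (C * M + M * C)).trace := by rw [hid]
        _ = (S * C * M).trace + (S * M * C).trace := by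
            rw [mul_add, trace_add, ← mul_assoc, ← mul_assoc]
        _ = (S * C * M).trace + (C * S * M).trace := by rw [trace_mul_cycle S M C]
        _ = (K * M).trace + (K * M).trace := by rw [hSC, hCS]
    linear_combination h2 / 2
  -- Step 3: `re Tr (K M) ≥ ∑ lam²`
  have hsand : (K * M).trace = ∑ i, Complex.ofReal |lam i| * ((Uᴴ * M * U) i i) := by
    rw [hKdef, trace_sandwich]
  have ha : ∀ i, 0 ≤ ((Uᴴ * A * U) i i).re := by
    intro i
    rw [col_entry]
    exact hA.re_dotProduct_nonneg _
  have hb : ∀ i, 0 ≤ ((Uᴴ * B * U) i i).re := by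
    intro i
    rw [col_entry]
    exact hB.re_dotProduct_nonneg _
  have hMsplit : Uᴴ * M * U = Uᴴ * A * U + Uᴴ * B * U := by
    rw [hMdef, mul_add, add_mul]
  have hCsplit : Uᴴ * C * U = Uᴴ * A * U - Uᴴ * B * U := by
    rw [hCdef, mul_sub, sub_mul]
  have hlam_entry : ∀ i, ((Uᴴ * A * U) i i).re - ((Uᴴ * B * U) i i).re = lam i := by
    intro i
    have h := congrArg (fun (N : Matrix (Fin n) (Fin n) ℂ) => (N i i).re) hCsplit
    simp only [Matrix.sub_apply, Complex.sub_re] at h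
    rw [hdiagC] at h
    simp only [diagonal_apply_eq, Complex.ofReal_re] at h
    linarith [h]
  have habs : ∀ i, |lam i| ≤ ((Uᴴ * M * U) i i).re := by
    intro i
    have h := congrArg (fun (N : Matrix (Fin n) (Fin n) ℂ) => (N i i).re) hMsplit
    simp only [Matrix.add_apply, Complex.add_re] at h
    rw [h]
    have h1 := ha i
    have h2 := hb i
    have h3 := hlam_entry i
    rw [abs_le]
    constructor <;> [linarith [abs_nonneg (lam i)]; skip]
    · linarith
  have step3 : ((K * M).trace).re ≥ ∑ i, lam i ^ 2 := by
    rw [hsand, Complex.re_sum]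
    refine Finset.sum_le_sum fun i _ => ?_
    rw [show (Complex.ofReal |lam i| * ((Uᴴ * M * U) i i)).re
      = |lam i| * ((Uᴴ * M * U) i i).re from by rw [Complex.mul_re]; simp]
    calc lam i ^ 2 = |lam i| * |lam i| := by rw [abs_mul_abs_self]; ring
      _ ≤ |lam i| * ((Uᴴ * M * U) i i).re :=
          mul_le_mul_of_nonneg_left (habs i) (abs_nonneg _)
  -- Step 4: `∑ lam² = re Tr (C C) = 2 - 2 re Tr (A B)`
  have hCC : (C * C).trace = ∑ i, (RCLike.ofReal ∘ lam) i * ((Uᴴ * C * U) i i) := by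
    conv_lhs => rw [show C * C = U * diagonal (RCLike.ofReal ∘ lam) * Uᴴ * C from by
      rw [← hspecC]]
    rw [trace_sandwich]
  have hCCval : ((C * C).trace).re = ∑ i, lam i ^ 2 := by
    rw [hCC, Complex.re_sum]
    refine Finset.sum_congr rfl fun i _ => ?_
    rw [hdiagC]
    simp only [diagonal_apply_eq, Function.comp_apply]
    rw [show ((RCLike.ofReal (lam i) : ℂ) * Complex.ofReal (lam i))
      = Complex.ofReal (lam i ^ 2) from by
        rw [show (RCLike.ofReal (lam i) : ℂ) = Complex.ofReal (lam i) from rfl,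
          ← Complex.ofReal_mul, ← sq]]
    exact Complex.ofReal_re _
  have hCCexpand : C * C = ρ - A * B - B * A + ρ' := by
    rw [hCdef, ← hA2, ← hB2]
    noncomm_ring
  have hCCtr : (C * C).trace = 2 - 2 * (A * B).trace := by
    rw [hCCexpand, trace_add, trace_sub, trace_sub, hρtr, hρ'tr, trace_mul_comm B A]
    ring
  have hCCre : ((C * C).trace).re = 2 - 2 * ((A * B).trace).re := by
    rw [hCCtr]
    simp [Complex.sub_re, Complex.mul_re]
  -- Step 5: `re Tr (A B) ≤ fidelity`
  have hfid : ((A * B).trace).re ≤ fidelity ρ ρ' := by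
    have h5 := re_trace_le_trace_msqrt (A * B)
    have hX : (A * B)ᴴ * (A * B) = B * ρ * B := by
      rw [conjTranspose_mul, hB.1.eq, hA.1.eq, ← hA2]
      noncomm_ring
    rw [hX] at h5
    exact h5
  -- Final assembly
  have hre2 : ((S * (ρ - ρ')).trace).re = ((K * M).trace).re := by rw [step2]
  have := step1
  rw [hre2] at this
  have hfinal : 2 - 2 * ((A * B).trace).re ≤ traceNorm (ρ - ρ') := by
    linarith [step3, hCCval, hCCre]
  linarith [hfid, hfinal]
end

section
/- Let $C_1 \subset \mathbb{F}_2^N$ be an $(l+m)$-dimensional linear code and let $C_2(X) \subset C_1$ be a random $m$-dimensional subcode such that $\mathrm{P}_X\{x \in C_2(X)^\perp\} \leq 2^{-m}$ for every $x \in \mathbb{F}_2^N \setminus C_1^\perp$. Partition the $N$ coordinates into a noiseless part of size $n_0$, a part of size $n_1$ where at most $t \le n_1/2$ errors occur, and a part of size $n_2$ with arbitrary errors. If Alice sends a uniformly random representative of a coset $[x] \in C_2(X)^\perp/C_1^\perp$ and Bob decodes the received word $y$ to the element of $C_2(X)^\perp$ agreeing with $y$ on the noiseless part and minimizing the Hamming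 weight of the difference on the $n_1$-part, then the expected (over $X$) decoding error probability is at most $2^{n_1 \bar{h}(t/n_1) + n_2 - m}$. -/
open Matrix

/-- Vectors over `F₂` whose `N = n₀ + n₁ + n₂` coordinates are partitioned into three
parts of sizes `n₀`, `n₁`, `n₂`. -/
abbrev BitVec3 (n0 n1 n2 : ℕ) := (Fin n0 ⊕ Fin n1 ⊕ Fin n2) → ZMod 2

/-- The dual code `C^⊥ = {z | z ⋅ c = 0 for all c ∈ C}`. -/
def dualCode {ι : Type*} [Fintype ι] (C : Submodule (ZMod 2) (ι → ZMod 2)) :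
    Submodule (ZMod 2) (ι → ZMod 2) where
  carrier := {z | ∀ c ∈ C, z ⬝ᵥ c = 0}
  add_mem' := by
    intro a b ha hb c hc
    simp [add_dotProduct, ha c hc, hb c hc]
  zero_mem' := by
    intro c hc
    simp
  smul_mem' := by
    intro r a ha c hc
    simp [smul_dotProduct, ha c hc]

/-- The binary entropy function, extended by `1` above `1/2`. -/
noncomputable def hbar (x : ℝ) : ℝ :=
  if x ≤ 1 / 2 then -x * Real.logb 2 x - (1 - x) * Real.logb 2 (1 - x) else 1

lemma zmod2_eq_of_ne_iff : ∀ a b : ZMod 2, ((a ≠ 0) ↔ (b ≠ 0)) → a = b := by decide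

open Finset in
lemma aux_count (n t : ℕ) :
    ((Finset.univ.filter fun s : Finset (Fin n) => s.card ≤ t).card)
      = ∑ j ∈ Finset.range (t + 1), n.choose j := by
  have h : (Finset.univ.filter fun s : Finset (Fin n) => s.card ≤ t)
      = (Finset.range (t + 1)).biUnion (fun j => Finset.powersetCard j Finset.univ) := by
    ext s
    simp [Finset.mem_powersetCard_univ, Nat.lt_succ_iff]
  rw [h, Finset.card_biUnion]
  · simp [Finset.card_powersetCard]
  · intro i _ j _ hij
    simp only [Finset.disjoint_left, Finset.mem_powersetCard_univ]
    rintro s rfl h2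
    exact hij h2
open Finset Real in
lemma sum_choose_le_exp_entropy (n t : ℕ) (ht : 2 * t ≤ n) :
    (∑ j ∈ Finset.range (t + 1), (n.choose j : ℝ)) ≤
      (2 : ℝ) ^ ((n : ℝ) * hbar ((t : ℝ) / n)) := by
  rcases Nat.eq_zero_or_pos t with rfl | htpos
  · have h0 : ((0:ℕ) : ℝ) / n = 0 := by simp
    have : hbar (((0:ℕ) : ℝ) / n) = 0 := by
      rw [h0, hbar]
      norm_num
    rw [this]
    simp
  have hn : 0 < n := lt_of_lt_of_le (by omega) ht
  have htn : t ≤ n := by omega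
  set p : ℝ := (t : ℝ) / n with hp
  have hnR : (0:ℝ) < n := by exact_mod_cast hn
  have hp0 : 0 < p := div_pos (by exact_mod_cast htpos) hnR
  have hp2 : p ≤ 1 / 2 := by
    rw [hp, div_le_div_iff₀ hnR (by norm_num)]
    have : (2:ℝ) * t ≤ n := by exact_mod_cast ht
    linarith
  have hp1 : p < 1 := lt_of_le_of_lt hp2 (by norm_num)
  have h1p : 0 < 1 - p := by linarith
  have hple : p ≤ 1 - p := by linarith
  have hnp : (n : ℝ) * p = t := by
    rw [hp]; field_simp
  have key : (∑ j ∈ Finset.range (t + 1), (n.choose j : ℝ)) * (p ^ t * (1 - p) ^ (n - t)) ≤ 1 := by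
    rw [Finset.sum_mul]
    have step1 : ∀ j ∈ Finset.range (t + 1),
        (n.choose j : ℝ) * (p ^ t * (1 - p) ^ (n - t)) ≤
          p ^ j * (1 - p) ^ (n - j) * (n.choose j : ℝ) := by
      intro j hj
      rw [Finset.mem_range, Nat.lt_succ_iff] at hj
      have e1 : p ^ t = p ^ j * p ^ (t - j) := by
        rw [← pow_add]; congr 1; omega
      have e2 : (1 - p) ^ (n - j) = (1 - p) ^ (t - j) * (1 - p) ^ (n - t) := by
        rw [← pow_add]; congr 1; omega
      have e3 : p ^ (t - j) ≤ (1 - p) ^ (t - j) :=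
        pow_le_pow_left₀ hp0.le hple _
      calc (n.choose j : ℝ) * (p ^ t * (1 - p) ^ (n - t))
          = (n.choose j : ℝ) * (p ^ j * (p ^ (t - j) * (1 - p) ^ (n - t))) := by
            rw [e1]; ring
        _ ≤ (n.choose j : ℝ) * (p ^ j * ((1 - p) ^ (t - j) * (1 - p) ^ (n - t))) := by
            apply mul_le_mul_of_nonneg_left _ (Nat.cast_nonneg _)
            apply mul_le_mul_of_nonneg_left _ (pow_nonneg hp0.le _)
            exact mul_le_mul_of_nonneg_right e3 (pow_nonneg h1p.le _)
        _ = p ^ j * (1 - p) ^ (n - j) * (n.choose j : ℝ) := by rw [e2]; ring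
    calc ∑ j ∈ Finset.range (t + 1), (n.choose j : ℝ) * (p ^ t * (1 - p) ^ (n - t))
        ≤ ∑ j ∈ Finset.range (t + 1), p ^ j * (1 - p) ^ (n - j) * (n.choose j : ℝ) :=
          Finset.sum_le_sum step1
      _ ≤ ∑ j ∈ Finset.range (n + 1), p ^ j * (1 - p) ^ (n - j) * (n.choose j : ℝ) := by
          apply Finset.sum_le_sum_of_subset_of_nonneg
          · exact Finset.range_subset_range.mpr (by omega)
          · intro j _ _
            positivity
      _ = (p + (1 - p)) ^ n := (add_pow p (1 - p) n).symm
      _ = 1 := by norm_num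
  have hbarval : hbar p = -p * logb 2 p - (1 - p) * logb 2 (1 - p) := by
    rw [hbar, if_pos hp2]
  have hexp : (n : ℝ) * hbar p = logb 2 p * (-(t : ℝ)) + logb 2 (1 - p) * (-((n - t : ℕ) : ℝ)) := by
    rw [hbarval]
    have hcast : ((n - t : ℕ) : ℝ) = (n : ℝ) - t := by
      rw [Nat.cast_sub htn]
    rw [hcast]
    linear_combination (Real.logb 2 (1 - p) - Real.logb 2 p) * hnp
  have hrhs : (2 : ℝ) ^ ((n : ℝ) * hbar p) = (p ^ t * (1 - p) ^ (n - t))⁻¹ := by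
    rw [hexp, Real.rpow_add (by norm_num)]
    rw [Real.rpow_mul (by norm_num), Real.rpow_mul (by norm_num)]
    rw [Real.rpow_logb (by norm_num) (by norm_num) hp0,
      Real.rpow_logb (by norm_num) (by norm_num) h1p]
    rw [Real.rpow_neg hp0.le, Real.rpow_neg h1p.le,
      Real.rpow_natCast, Real.rpow_natCast, mul_inv]
  have hA : 0 < p ^ t * (1 - p) ^ (n - t) := by positivity
  rw [hrhs, ← one_div]
  exact (le_div_iff₀ hA).mpr key


open Classical in
/-- Random-hashing error bound (Proposition 1 / Theorem 3 of the paper).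
`C₁` is an `(l+m)`-dimensional code, `C₂(X)` a random `m`-dimensional subcode such that
every `x ∉ C₁^⊥` lies in `C₂(X)^⊥` with probability at most `2^{-m}`.  The coordinates
are partitioned into a noiseless part (size `n₀`), a part with at most `t ≤ n₁/2` errors
(size `n₁`) and an arbitrary part (size `n₂`).  Alice sends a uniformly random
representative of a coset `[x] ∈ C₂(X)^⊥/C₁^⊥`, and Bob decodes by `Γ`, which outputs
an element of `C₂(X)^⊥` agreeing with `y` on the noiseless part and minimizing the
Hamming weight of the difference on the `n₁`-part.  Then the expected decoding error
probability is at most `2^{n₁ h̄(t/n₁) + n₂ - m}`. -/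
theorem random_hashing_error_bound (n0 n1 n2 t l m : ℕ) (ht : 2 * t ≤ n1)
    (Ω : Type*) [Fintype Ω] (μ : Ω → ℝ) (hμ0 : ∀ ω, 0 ≤ μ ω) (hμ1 : ∑ ω, μ ω = 1)
    (C1 : Submodule (ZMod 2) (BitVec3 n0 n1 n2))
    (hC1rank : Module.finrank (ZMod 2) C1 = l + m)
    (C2 : Ω → Submodule (ZMod 2) (BitVec3 n0 n1 n2))
    (hC2sub : ∀ ω, C2 ω ≤ C1)
    (hC2rank : ∀ ω, Module.finrank (ZMod 2) (C2 ω) = m)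
    (hrand : ∀ x : BitVec3 n0 n1 n2, x ∉ dualCode C1 →
      ∑ᶠ ω ∈ {ω | x ∈ dualCode (C2 ω)}, μ ω ≤ ((2 : ℝ) ^ m)⁻¹)
    -- the channel: an additive error `e` with distribution `q`, supported on errors
    -- vanishing on the 0th part and of Hamming weight at most `t` on the 1st part
    (q : BitVec3 n0 n1 n2 → ℝ) (hq0 : ∀ e, 0 ≤ q e) (hq1 : ∑ e, q e = 1)
    (hqsupp : ∀ e, q e ≠ 0 →
      (∀ i : Fin n0, e (Sum.inl i) = 0) ∧
      hammingNorm (fun i : Fin n1 => e (Sum.inr (Sum.inl i))) ≤ t)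
    -- the sent word
    (x : BitVec3 n0 n1 n2) (hx : ∀ ω, x ∈ dualCode (C2 ω))
    -- the decoder
    (Γ : Ω → BitVec3 n0 n1 n2 → BitVec3 n0 n1 n2)
    (hΓmem : ∀ ω y, Γ ω y ∈ dualCode (C2 ω))
    (hΓ0 : ∀ ω y (i : Fin n0), Γ ω y (Sum.inl i) = y (Sum.inl i))
    (hΓmin : ∀ ω y z, z ∈ dualCode (C2 ω) →
      (∀ i : Fin n0, z (Sum.inl i) = y (Sum.inl i)) →
      hammingNorm (fun i : Fin n1 => (y - Γ ω y) (Sum.inr (Sum.inl i))) ≤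
        hammingNorm (fun i : Fin n1 => (y - z) (Sum.inr (Sum.inl i)))) :
    ∑ ω, μ ω * ((Nat.card (dualCode C1) : ℝ)⁻¹ *
        ∑ᶠ c ∈ (dualCode C1 : Set (BitVec3 n0 n1 n2)),
          ∑ e, q e * (if Γ ω (x + c + e) - x ∈ dualCode C1 then 0 else 1)) ≤
      (2 : ℝ) ^ ((n1 : ℝ) * hbar ((t : ℝ) / (n1 : ℝ)) + (n2 : ℝ) - (m : ℝ)) := by
  classical
  have hanti : ∀ ω, dualCode C1 ≤ dualCode (C2 ω) :=
    fun ω z hz c hc => hz c (hC2sub ω hc)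
  set ind : Ω → BitVec3 n0 n1 n2 → ℝ :=
    fun ω v => if v ∈ dualCode (C2 ω) ∧ v ∉ dualCode C1 then 1 else 0 with hind
  set V : BitVec3 n0 n1 n2 → Finset (BitVec3 n0 n1 n2) :=
    fun e => Finset.univ.filter (fun v => (∀ i : Fin n0, v (Sum.inl i) = 0) ∧
      hammingNorm (fun i : Fin n1 => (e - v) (Sum.inr (Sum.inl i))) ≤ t) with hV
  set B : Ω → ℝ := fun ω => ∑ e, q e * ∑ v ∈ V e, ind ω v with hB
  set K : ℕ := (∑ j ∈ Finset.range (t + 1), n1.choose j) * 2 ^ n2 with hK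
  have hind01 : ∀ ω v, 0 ≤ ind ω v := by
    intro ω v
    simp only [hind]
    split <;> norm_num
  -- Step 1 : pointwise bound on the error indicator
  have step1 : ∀ ω, ∀ c ∈ dualCode C1, ∀ e : BitVec3 n0 n1 n2,
      q e * (if Γ ω (x + c + e) - x ∈ dualCode C1 then (0:ℝ) else 1) ≤
        q e * ∑ v ∈ V e, ind ω v := by
    intro ω c hc e
    rcases eq_or_ne (q e) 0 with hqe | hqe
    · simp [hqe]
    apply mul_le_mul_of_nonneg_left _ (hq0 e)
    split_ifs with herr
    · exact Finset.sum_nonneg fun v _ => hind01 ω v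
    · set y : BitVec3 n0 n1 n2 := x + c + e with hy
      set v : BitVec3 n0 n1 n2 := Γ ω y - x - c with hvdef
      have hv2 : v ∈ dualCode (C2 ω) :=
        sub_mem (sub_mem (hΓmem ω y) (hx ω)) (hanti ω hc)
      have hvc1 : v ∉ dualCode C1 := by
        intro h
        apply herr
        have hvx : Γ ω y - x = v + c := by rw [hvdef]; ring
        rw [hvx]
        exact add_mem h hc
      have hv0 : ∀ i : Fin n0, v (Sum.inl i) = 0 := by
        intro i
        have he0 := (hqsupp e hqe).1 i
        have h1 : v (Sum.inl i) = Γ ω y (Sum.inl i) - x (Sum.inl i) - c (Sum.inl i) := rfl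
        have h2 : y (Sum.inl i) = x (Sum.inl i) + c (Sum.inl i) + e (Sum.inl i) := rfl
        rw [h1, hΓ0 ω y i, h2, he0]
        ring
      have hev : e - v = y - Γ ω y := by rw [hvdef, hy]; ring
      have hz0 : ∀ i : Fin n0, (x + c) (Sum.inl i) = y (Sum.inl i) := by
        intro i
        have he0 := (hqsupp e hqe).1 i
        have h2 : y (Sum.inl i) = x (Sum.inl i) + c (Sum.inl i) + e (Sum.inl i) := rfl
        show x (Sum.inl i) + c (Sum.inl i) = y (Sum.inl i)
        rw [h2, he0]; ring
      have hyz : y - (x + c) = e := by rw [hy]; ring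
      have hwt : hammingNorm (fun i : Fin n1 => (e - v) (Sum.inr (Sum.inl i))) ≤ t := by
        rw [hev]
        calc hammingNorm (fun i : Fin n1 => (y - Γ ω y) (Sum.inr (Sum.inl i)))
            ≤ hammingNorm (fun i : Fin n1 => (y - (x + c)) (Sum.inr (Sum.inl i))) :=
              hΓmin ω y (x + c) (add_mem (hx ω) (hanti ω hc)) hz0
          _ ≤ t := by rw [hyz]; exact (hqsupp e hqe).2
      have hvV : v ∈ V e := by
        simp only [hV, Finset.mem_filter, Finset.mem_univ, true_and]
        exact ⟨hv0, hwt⟩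
      have hone : (1:ℝ) = ind ω v := by simp [hind, hv2, hvc1]
      rw [hone]
      exact Finset.single_le_sum (fun w _ => hind01 ω w) hvV
  -- Step 2 : averaging over the coset
  set D1 : Set (BitVec3 n0 n1 n2) := (dualCode C1 : Set (BitVec3 n0 n1 n2)) with hD1
  have hfin : D1.Finite := Set.toFinite D1
  have hcard1 : Nat.card (dualCode C1) = hfin.toFinset.card := by
    have h1 : Nat.card (dualCode C1) = Nat.card D1 := rfl
    rw [h1, Nat.card_coe_set_eq, Set.ncard_eq_toFinset_card _ hfin]
  have hpos : 0 < hfin.toFinset.card := by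
    rw [Finset.card_pos]
    exact ⟨0, hfin.mem_toFinset.mpr (Submodule.zero_mem (dualCode C1))⟩
  have step2 : ∀ ω, (Nat.card (dualCode C1) : ℝ)⁻¹ *
      (∑ᶠ c ∈ D1, ∑ e, q e * (if Γ ω (x + c + e) - x ∈ dualCode C1 then (0:ℝ) else 1)) ≤ B ω := by
    intro ω
    rw [finsum_mem_eq_finite_toFinset_sum _ hfin]
    have h1 : ∑ c ∈ hfin.toFinset, (∑ e, q e * (if Γ ω (x + c + e) - x ∈ dualCode C1 then (0:ℝ) else 1))
        ≤ ∑ _c ∈ hfin.toFinset, B ω := by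
      apply Finset.sum_le_sum
      intro c hcmem
      have hc : c ∈ dualCode C1 := hfin.mem_toFinset.mp hcmem
      exact Finset.sum_le_sum fun e _ => step1 ω c hc e
    rw [Finset.sum_const, nsmul_eq_mul] at h1
    calc (Nat.card (dualCode C1) : ℝ)⁻¹ *
          ∑ c ∈ hfin.toFinset, (∑ e, q e * (if Γ ω (x + c + e) - x ∈ dualCode C1 then (0:ℝ) else 1))
        ≤ (Nat.card (dualCode C1) : ℝ)⁻¹ * ((hfin.toFinset.card : ℝ) * B ω) := by
          apply mul_le_mul_of_nonneg_left h1 (by positivity)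
      _ = B ω := by
          rw [hcard1]
          rw [inv_mul_cancel_left₀ (Nat.cast_ne_zero.mpr hpos.ne')]
  -- counting
  have hVcard : ∀ e, (V e).card ≤ K := by
    intro e
    set T : Finset (Finset (Fin n1) × (Fin n2 → ZMod 2)) :=
      (Finset.univ.filter fun s : Finset (Fin n1) => s.card ≤ t) ×ˢ Finset.univ with hT
    have hmaps : ∀ v ∈ V e,
        ((Finset.univ.filter (fun i : Fin n1 => (e - v) (Sum.inr (Sum.inl i)) ≠ 0),
          fun i : Fin n2 => v (Sum.inr (Sum.inr i))) :
            Finset (Fin n1) × (Fin n2 → ZMod 2)) ∈ T := by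
      intro v hv
      simp only [hV, Finset.mem_filter, Finset.mem_univ, true_and] at hv
      rw [hT, Finset.mem_product]
      refine ⟨Finset.mem_filter.mpr ⟨Finset.mem_univ _, ?_⟩, Finset.mem_univ _⟩
      exact hv.2
    have hinj : Set.InjOn (fun v : BitVec3 n0 n1 n2 =>
        ((Finset.univ.filter (fun i : Fin n1 => (e - v) (Sum.inr (Sum.inl i)) ≠ 0),
          fun i : Fin n2 => v (Sum.inr (Sum.inr i))) :
            Finset (Fin n1) × (Fin n2 → ZMod 2))) (V e) := by
      intro v hv v' hv' hφ
      simp only [hV, Finset.coe_filter, Set.mem_setOf_eq, Finset.mem_univ, true_and] at hv hv'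
      have h1 := congrArg Prod.fst hφ
      have h2 := congrArg Prod.snd hφ
      simp only at h1 h2
      funext j
      match j with
      | Sum.inl i => rw [hv.1 i, hv'.1 i]
      | Sum.inr (Sum.inl i) =>
          have hiff := Finset.ext_iff.mp h1 i
          simp only [Finset.mem_filter, Finset.mem_univ, true_and] at hiff
          have heq : (e - v) (Sum.inr (Sum.inl i)) = (e - v') (Sum.inr (Sum.inl i)) :=
            zmod2_eq_of_ne_iff _ _ hiff
          have heq2 : e (Sum.inr (Sum.inl i)) - v (Sum.inr (Sum.inl i)) =
              e (Sum.inr (Sum.inl i)) - v' (Sum.inr (Sum.inl i)) := heq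
          have := sub_right_injective heq2
          exact this
      | Sum.inr (Sum.inr i) => exact congrFun h2 i
    calc (V e).card ≤ T.card := Finset.card_le_card_of_injOn _ hmaps hinj
      _ = K := by
          rw [hT, Finset.card_product, aux_count, hK]
          congr 1
          rw [Finset.card_univ, Fintype.card_fun, ZMod.card, Fintype.card_fin]
  -- Step 3 : summing over ω
  have hswap : ∑ ω, μ ω * B ω = ∑ e, ∑ v ∈ V e, ∑ ω, q e * (μ ω * ind ω v) := by
    simp only [hB, Finset.mul_sum]
    rw [Finset.sum_comm]
    refine Finset.sum_congr rfl fun e _ => ?_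
    rw [Finset.sum_comm]
    exact Finset.sum_congr rfl fun v _ => Finset.sum_congr rfl fun ω _ => by ring
  have hvbound : ∀ v : BitVec3 n0 n1 n2, ∑ ω, μ ω * ind ω v ≤ ((2:ℝ) ^ m)⁻¹ := by
    intro v
    by_cases hvD : v ∈ dualCode C1
    · have hz : ∀ ω, μ ω * ind ω v = 0 := fun ω => by simp [hind, hvD]
      simp only [hz, Finset.sum_const_zero]
      positivity
    · have hle := hrand v hvD
      have heq : ∑ᶠ ω ∈ {ω | v ∈ dualCode (C2 ω)}, μ ω
          = ∑ ω ∈ Finset.univ.filter (fun ω => v ∈ dualCode (C2 ω)), μ ω := by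
        rw [finsum_mem_eq_finite_toFinset_sum _ (Set.toFinite _)]
        congr 1
        ext ω
        simp
      have heq2 : ∑ ω, μ ω * ind ω v
          = ∑ ω ∈ Finset.univ.filter (fun ω => v ∈ dualCode (C2 ω)), μ ω := by
        rw [Finset.sum_filter]
        apply Finset.sum_congr rfl
        intro ω _
        by_cases h2 : v ∈ dualCode (C2 ω) <;> simp [hind, h2, hvD]
      rw [heq2, ← heq]
      exact hle
  have step3 : ∑ ω, μ ω * B ω ≤ (K : ℝ) * ((2:ℝ) ^ m)⁻¹ := by
    rw [hswap]
    calc ∑ e, ∑ v ∈ V e, ∑ ω, q e * (μ ω * ind ω v)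
        = ∑ e, q e * ∑ v ∈ V e, ∑ ω, μ ω * ind ω v := by
          refine Finset.sum_congr rfl fun e _ => ?_
          rw [Finset.mul_sum]
          exact Finset.sum_congr rfl fun v _ => by rw [Finset.mul_sum]
      _ ≤ ∑ e, q e * ((K:ℝ) * ((2:ℝ)^m)⁻¹) := by
          apply Finset.sum_le_sum
          intro e _
          apply mul_le_mul_of_nonneg_left _ (hq0 e)
          calc ∑ v ∈ V e, ∑ ω, μ ω * ind ω v ≤ ∑ _v ∈ V e, ((2:ℝ)^m)⁻¹ :=
                Finset.sum_le_sum fun v _ => hvbound v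
            _ = ((V e).card : ℝ) * ((2:ℝ)^m)⁻¹ := by rw [Finset.sum_const, nsmul_eq_mul]
            _ ≤ (K:ℝ) * ((2:ℝ)^m)⁻¹ := by
                apply mul_le_mul_of_nonneg_right _ (by positivity)
                exact_mod_cast hVcard e
      _ = (K:ℝ) * ((2:ℝ)^m)⁻¹ := by rw [← Finset.sum_mul, hq1, one_mul]
  -- Step 5 : final numeric bound
  have step5 : (K : ℝ) * ((2:ℝ) ^ m)⁻¹ ≤
      (2:ℝ) ^ ((n1:ℝ) * hbar ((t:ℝ)/(n1:ℝ)) + (n2:ℝ) - (m:ℝ)) := by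
    have hKle : (K : ℝ) ≤ (2:ℝ) ^ ((n1:ℝ) * hbar ((t:ℝ)/(n1:ℝ))) * 2 ^ n2 := by
      rw [hK]
      push_cast
      exact mul_le_mul_of_nonneg_right (sum_choose_le_exp_entropy n1 t ht) (by positivity)
    have hsplit : (2:ℝ) ^ ((n1:ℝ) * hbar ((t:ℝ)/(n1:ℝ)) + (n2:ℝ) - (m:ℝ))
        = (2:ℝ) ^ ((n1:ℝ) * hbar ((t:ℝ)/(n1:ℝ))) * 2 ^ n2 * ((2:ℝ)^m)⁻¹ := by
      rw [sub_eq_add_neg, Real.rpow_add (by norm_num : (0:ℝ) < 2),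
        Real.rpow_add (by norm_num : (0:ℝ) < 2),
        Real.rpow_natCast, Real.rpow_neg (by norm_num : (0:ℝ) ≤ 2), Real.rpow_natCast]
    rw [hsplit]
    exact mul_le_mul_of_nonneg_right hKle (by positivity)
  calc ∑ ω, μ ω * ((Nat.card (dualCode C1) : ℝ)⁻¹ *
        ∑ᶠ c ∈ D1, ∑ e, q e * (if Γ ω (x + c + e) - x ∈ dualCode C1 then (0:ℝ) else 1))
      ≤ ∑ ω, μ ω * B ω :=
        Finset.sum_le_sum fun ω _ => mul_le_mul_of_nonneg_left (step2 ω) (hμ0 ω)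
    _ ≤ (K : ℝ) * ((2:ℝ) ^ m)⁻¹ := step3
    _ ≤ _ := step5
end
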